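/- Assume irreflexivity of <_0 on worms. Worms satisfy the disjunction property: for worms A, A₁, …, A_I, GLP_Λ proves A → (A₁ ∨ ⋯ ∨ A_I) if and only if GLP_Λ proves A → A_i for some i ≤ I. -/
import Mathlib


inductive Formula (L : Type) : Type where
  | bot : Formula L
  | var : Nat → Formula L
  | imp : Formula L → Formula L → Formula L
  | box : L → Formula L → Formula L

namespace Formula

variable {L : Type}

def neg (φ : Formula L) : Formula L := imp φ bot
def top : Formula L := neg bot
def and (φ ψ : Formula L) : Formula L := neg (imp φ ψ.neg)
def or (φ ψ : Formula L) : Formula L := imp φ.neg ψ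
def iff (φ ψ : Formula L) : Formula L := (imp φ ψ).and (imp ψ φ)
def dia (α : L) (φ : Formula L) : Formula L := neg (box α φ.neg)

end Formula

open Formula

/-- Provability in the polymodal provability logic `GLP_Λ` over a linear order. -/
inductive GLP {L : Type} [LinearOrder L] : Formula L → Prop where
  | k1 : ∀ φ ψ : Formula L, GLP (φ.imp (ψ.imp φ))
  | k2 : ∀ φ ψ χ : Formula L, GLP ((φ.imp (ψ.imp χ)).imp ((φ.imp ψ).imp (φ.imp χ)))
  | k3 : ∀ φ ψ : Formula L, GLP ((φ.neg.imp ψ.neg).imp (ψ.imp φ))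
  | dist : ∀ (α : L) (φ ψ : Formula L), GLP ((Formula.box α (φ.imp ψ)).imp ((Formula.box α φ).imp (Formula.box α ψ)))
  | lob : ∀ (α : L) (φ : Formula L), GLP ((Formula.box α ((Formula.box α φ).imp φ)).imp (Formula.box α φ))
  | trans : ∀ (α β : L) (φ : Formula L), α ≤ β → GLP ((Formula.box α φ).imp (Formula.box β (Formula.box α φ)))
  | negintro : ∀ (α β : L) (φ : Formula L), α < β → GLP ((dia α φ).imp (Formula.box β (dia α φ)))
  | mono : ∀ (α β : L) (φ : Formula L), α ≤ β → GLP ((Formula.box α φ).imp (Formula.box β φ))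
  | mp : ∀ φ ψ : Formula L, GLP (φ.imp ψ) → GLP φ → GLP ψ
  | nec : ∀ (α : L) (φ : Formula L), GLP φ → GLP (Formula.box α φ)

/-- The worm (iterated consistency statement) associated to a list of modalities. -/
def worm {L : Type} : List L → Formula L
  | [] => Formula.top
  | α :: w => Formula.dia α (worm w)

/-- `Lt α A B` iff `GLP ⊢ B → ⟨α⟩A`. -/
def Lt {L : Type} [LinearOrder L] (α : L) (A B : List L) : Prop :=
  GLP ((worm B).imp (Formula.dia α (worm A)))

def Le {L : Type} [LinearOrder L] (α : L) (A B : List L) : Prop :=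
  Lt α A B ∨ A = B

def disjWorms {L : Type} (l : List (List L)) : Formula L :=
  (l.map worm).foldr Formula.or Formula.bot

section WormTools
variable {L : Type} [LinearOrder L]

private lemma gmp {φ ψ : Formula L} (h1 : GLP (φ.imp ψ)) (h2 : GLP φ) : GLP ψ := GLP.mp _ _ h1 h2

private lemma gid (φ : Formula L) : GLP (φ.imp φ) :=
  gmp (gmp (GLP.k2 φ (φ.imp φ) φ) (GLP.k1 _ _)) (GLP.k1 _ _)

private lemma glift {φ ψ : Formula L} (h : GLP ψ) : GLP (φ.imp ψ) := gmp (GLP.k1 _ _) h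

private lemma ghs {φ ψ χ : Formula L} (h1 : GLP (φ.imp ψ)) (h2 : GLP (ψ.imp χ)) : GLP (φ.imp χ) :=
  gmp (gmp (GLP.k2 φ ψ χ) (glift h2)) h1

private lemma gapp1 {A B : Formula L} (h : GLP A) : GLP ((A.imp B).imp B) :=
  gmp (gmp (GLP.k2 (A.imp B) A B) (gid _)) (glift h)

private lemma gswap {A B C : Formula L} (h : GLP (A.imp (B.imp C))) : GLP (B.imp (A.imp C)) :=
  ghs (GLP.k1 B A) (gmp (GLP.k2 A B C) h)

private lemma gmp2 {X A B : Formula L} (h1 : GLP (X.imp (A.imp B))) (h2 : GLP A) : GLP (X.imp B) :=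
  ghs h1 (gapp1 h2)

private lemma gmpc {X A B : Formula L} (h1 : GLP (X.imp (A.imp B))) (h2 : GLP (X.imp A)) : GLP (X.imp B) :=
  gmp (gmp (GLP.k2 X A B) h1) h2

private lemma gtb {φ ψ χ : Formula L} : GLP ((ψ.imp χ).imp ((φ.imp ψ).imp (φ.imp χ))) :=
  ghs (GLP.k1 (ψ.imp χ) φ) (GLP.k2 φ ψ χ)

private lemma glimp {φ ψ χ : Formula L} (h : GLP (ψ.imp χ)) : GLP ((φ.imp ψ).imp (φ.imp χ)) := gmp gtb h

private lemma gcontra_thm {X Y : Formula L} : GLP ((X.imp Y).imp (Y.neg.imp X.neg)) := gswap gtb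

private lemma gcontra {φ ψ : Formula L} (h : GLP (φ.imp ψ)) : GLP (ψ.neg.imp φ.neg) := gmp gcontra_thm h

private lemma gefq (φ : Formula L) : GLP (Formula.bot.imp φ) :=
  gmp (GLP.k3 φ Formula.bot) (glift (gid Formula.bot))

private lemma gddn (φ : Formula L) : GLP (φ.imp φ.neg.neg) := gswap (gid φ.neg)

private lemma gdne (φ : Formula L) : GLP (φ.neg.neg.imp φ) := gmp (GLP.k3 φ φ.neg.neg) (gddn φ.neg)

private lemma gcontra2 {φ ψ : Formula L} (h : GLP (φ.imp ψ.neg)) : GLP (ψ.imp φ.neg) :=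
  ghs (gddn ψ) (gmp gcontra_thm h)

private lemma gcontra3 {φ ψ : Formula L} (h : GLP (φ.neg.imp ψ)) : GLP (ψ.neg.imp φ) :=
  ghs (gcontra h) (gdne φ)

private lemma gand_l {φ ψ : Formula L} : GLP ((φ.and ψ).imp φ) := gcontra3 (glimp (gefq ψ.neg))

private lemma gand_r {φ ψ : Formula L} : GLP ((φ.and ψ).imp ψ) := gcontra3 (GLP.k1 ψ.neg φ)

private lemma gandi {χ φ ψ : Formula L} (h1 : GLP (χ.imp φ)) (h2 : GLP (χ.imp ψ)) :
    GLP (χ.imp (φ.and ψ)) := by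
  have s1 : GLP ((φ.imp ψ.neg).imp (χ.imp ψ.neg)) := gmp2 gtb h1
  have s2 : GLP ((φ.imp ψ.neg).imp ((χ.imp ψ).imp χ.neg)) := ghs s1 (GLP.k2 χ ψ Formula.bot)
  have s3 : GLP ((φ.imp ψ.neg).imp χ.neg) := gmp2 s2 h2
  exact gcontra2 s3

private lemma gtop : GLP (Formula.top (L := L)) := gid Formula.bot

private lemma gto_top {φ : Formula L} : GLP (φ.imp Formula.top) := glift gtop

private lemma gor_inl {φ ψ : Formula L} : GLP (φ.imp (φ.or ψ)) := ghs (gddn φ) (glimp (gefq ψ))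

private lemma gor_inr {φ ψ : Formula L} : GLP (ψ.imp (φ.or ψ)) := GLP.k1 ψ φ.neg

private lemma gclavius {χ : Formula L} : GLP ((χ.neg.imp χ).imp χ) :=
  ghs (gmp (GLP.k2 χ.neg χ Formula.bot) (gid χ.neg)) (gdne χ)

private lemma gor_elim {φ ψ χ : Formula L} (h1 : GLP (φ.imp χ)) (h2 : GLP (ψ.imp χ)) :
    GLP ((φ.or ψ).imp χ) := by
  have s1 : GLP ((φ.neg.imp ψ).imp (φ.neg.imp χ)) := glimp h2
  have s2 : GLP ((φ.neg.imp χ).imp (χ.neg.imp χ)) := gmp2 gtb (gcontra h1)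
  exact ghs (ghs s1 s2) gclavius

private lemma gcurry {X φ χ : Formula L} (h : GLP ((X.and φ).imp χ)) : GLP (φ.imp (X.imp χ)) := by
  have s1 : GLP (χ.neg.imp (X.imp φ.neg)) := gcontra3 h
  have s2 : GLP (X.imp (χ.neg.imp φ.neg)) := gswap s1
  have s3 : GLP (X.imp (φ.imp χ)) := ghs s2 (GLP.k3 χ φ)
  exact gswap s3

private lemma guncurry {X φ χ : Formula L} (h : GLP (φ.imp (X.imp χ))) : GLP ((X.and φ).imp χ) :=
  gmpc (ghs gand_r h) gand_l

private lemma gand_or {X φ ψ χ : Formula L} (h1 : GLP ((X.and φ).imp χ))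
    (h2 : GLP ((X.and ψ).imp χ)) : GLP ((X.and (φ.or ψ)).imp χ) :=
  guncurry (gor_elim (gcurry h1) (gcurry h2))

private lemma gbox_mono {a : L} {φ ψ : Formula L} (h : GLP (φ.imp ψ)) :
    GLP ((Formula.box a φ).imp (Formula.box a ψ)) :=
  gmp (GLP.dist a φ ψ) (GLP.nec a _ h)

private lemma gdia_mono {a : L} {φ ψ : Formula L} (h : GLP (φ.imp ψ)) :
    GLP ((dia a φ).imp (dia a ψ)) :=
  gcontra (gbox_mono (gcontra h))

private lemma gdia_le {a b : L} (hab : a ≤ b) {φ : Formula L} :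
    GLP ((dia b φ).imp (dia a φ)) :=
  gcontra (GLP.mono a b φ.neg hab)

private lemma gdia_dia {a : L} {φ : Formula L} : GLP ((dia a (dia a φ)).imp (dia a φ)) := by
  have t : GLP ((Formula.box a φ.neg).imp (Formula.box a (Formula.box a φ.neg))) :=
    GLP.trans a a φ.neg le_rfl
  have t2 : GLP ((Formula.box a (Formula.box a φ.neg)).imp (Formula.box a (dia a φ).neg)) :=
    gbox_mono (gddn _)
  exact gcontra (ghs t t2)

private lemma gdia_dia_le {m a : L} (h : m ≤ a) {φ : Formula L} :
    GLP ((dia a (dia m φ)).imp (dia m φ)) :=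
  ghs (gdia_le h) gdia_dia

private lemma gdiaK {a : L} {φ ψ : Formula L} :
    GLP (((dia a φ).and (Formula.box a ψ)).imp (dia a (φ.and ψ))) := by
  have s : GLP ((ψ.and φ).imp (φ.and ψ)) := gandi gand_r gand_l
  have t1 : GLP ((φ.and ψ).neg.imp (ψ.imp φ.neg)) := ghs (gcontra s) (gdne _)
  have t2 : GLP (ψ.imp ((φ.and ψ).neg.imp φ.neg)) := gswap t1
  have t3 : GLP ((Formula.box a ψ).imp (Formula.box a ((φ.and ψ).neg.imp φ.neg))) := gbox_mono t2
  have t4 : GLP ((Formula.box a ψ).imp ((Formula.box a (φ.and ψ).neg).imp (Formula.box a φ.neg))) :=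
    ghs t3 (GLP.dist a _ _)
  have t5 : GLP ((Formula.box a ψ).imp ((dia a φ).imp (dia a (φ.and ψ)))) := ghs t4 gcontra_thm
  exact gmpc (ghs gand_r t5) gand_l

private lemma gJ2 {a b : L} (hba : b < a) {φ ψ : Formula L} :
    GLP (((dia a φ).and (dia b ψ)).imp (dia a (φ.and (dia b ψ)))) := by
  have s : GLP (((dia a φ).and (dia b ψ)).imp ((dia a φ).and (Formula.box a (dia b ψ)))) :=
    gandi gand_l (ghs gand_r (GLP.negintro b a ψ hba))
  exact ghs s gdiaK

end WormTools

section WormTools2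
variable {L : Type} [LinearOrder L]

private lemma gw_dia_top {m a : L} (h : m ≤ a) {w : List L} :
    GLP ((worm (a :: w)).imp (dia m (Formula.top))) :=
  ghs (gdia_mono (gto_top (φ := worm w))) (gdia_le h)

private lemma gsplit_fwd {m : L} : ∀ (P W : List L), (∀ x ∈ P, m < x) →
    GLP ((worm (P ++ m :: W)).imp ((worm P).and (dia m (worm W)))) := by
  intro P
  induction P with
  | nil => intro W _; exact gandi gto_top (gid _)
  | cons p P ih =>
    intro W hP
    have hm : m ≤ p := le_of_lt (hP p (by simp))
    have ihW := ih W (fun x hx => hP x (by simp [hx]))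
    have s1 : GLP ((worm (p :: P ++ m :: W)).imp (dia p ((worm P).and (dia m (worm W))))) :=
      gdia_mono ihW
    have s2 : GLP ((dia p ((worm P).and (dia m (worm W)))).imp (dia p (worm P))) :=
      gdia_mono gand_l
    have s3 : GLP ((dia p ((worm P).and (dia m (worm W)))).imp (dia m (worm W))) :=
      ghs (gdia_mono gand_r) (gdia_dia_le hm)
    exact ghs s1 (gandi s2 s3)

private lemma gsplit_bwd {m : L} : ∀ (P W : List L), (∀ x ∈ P, m < x) →
    GLP (((worm P).and (dia m (worm W))).imp (worm (P ++ m :: W))) := by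
  intro P
  induction P with
  | nil => intro W _; exact gand_r
  | cons p P ih =>
    intro W hP
    have s1 : GLP (((dia p (worm P)).and (dia m (worm W))).imp
        (dia p ((worm P).and (dia m (worm W))))) := gJ2 (hP p (by simp))
    exact ghs s1 (gdia_mono (ih W (fun x hx => hP x (by simp [hx]))))

private lemma gmem_split {m : L} : ∀ {A : List L}, m ∈ A → ∃ P W, A = P ++ m :: W ∧ m ∉ P := by
  intro A
  induction A with
  | nil => simp
  | cons a t iht =>
    intro h
    by_cases ha : m = a
    · subst ha; exact ⟨[], t, by simp, by simp⟩
    · have h' : m ∈ t := by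
        rcases List.mem_cons.1 h with h | h
        · exact absurd h ha
        · exact h
      obtain ⟨P, W, rfl, hP⟩ := iht h'
      exact ⟨a :: P, W, by simp, by simp [hP, ha]⟩

private lemma gexists_min : ∀ (l : List L), l ≠ [] → ∃ μ, μ ∈ l ∧ ∀ x ∈ l, μ ≤ x := by
  intro l
  induction l with
  | nil => simp
  | cons a t iht =>
    intro _
    by_cases ht : t = []
    · subst ht; exact ⟨a, by simp, by simp⟩
    · obtain ⟨μ, hmem, hlb⟩ := iht ht
      by_cases hle : a ≤ μ
      · refine ⟨a, by simp, ?_⟩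
        intro x hx
        rcases List.mem_cons.1 hx with rfl | hx
        · exact le_rfl
        · exact le_trans hle (hlb x hx)
      · refine ⟨μ, by simp [hmem], ?_⟩
        intro x hx
        rcases List.mem_cons.1 hx with rfl | hx
        · exact le_of_not_ge hle
        · exact hlb x hx

private lemma gdecomp (m : L) (A : List L) (hA : A ≠ []) (hlb : ∀ x ∈ A, m ≤ x) :
    ∃ P W : List L, (∀ x ∈ P, x ∈ A) ∧ (∀ x ∈ W, x ∈ A) ∧ (∀ x ∈ P, m < x) ∧
      W.length < A.length ∧ P.length ≤ A.length ∧ (m ∈ A → P.length < A.length) ∧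
      GLP ((worm A).imp (worm P)) ∧ GLP ((worm A).imp (dia m (worm W))) ∧
      GLP (((worm P).and (dia m (worm W))).imp (worm A)) := by
  by_cases hm : m ∈ A
  · obtain ⟨P, W, rfl, hmP⟩ := gmem_split hm
    have hPgt : ∀ x ∈ P, m < x := fun x hx =>
      lt_of_le_of_ne (hlb x (by simp [hx])) (fun he => hmP (he ▸ hx))
    have fwd := gsplit_fwd (m := m) P W hPgt
    refine ⟨P, W, fun x hx => by simp [hx], fun x hx => by simp [hx], hPgt,
      by simp; omega, by simp, fun _ => by simp,
      ghs fwd gand_l, ghs fwd gand_r, gsplit_bwd P W hPgt⟩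
  · obtain ⟨a, w, rfl⟩ := List.exists_cons_of_ne_nil hA
    refine ⟨a :: w, [], fun x hx => hx, by simp, ?_, by simp, le_rfl, fun h => absurd h hm,
      gid _, gw_dia_top (hlb a (by simp)), gand_l⟩
    intro x hx
    exact lt_of_le_of_ne (hlb x hx) (fun he => hm (he ▸ hx))

end WormTools2

section WormTri
variable {L : Type} [LinearOrder L]

private theorem gtri : ∀ (n : ℕ) (A B : List L) (m : L), A.length + B.length ≤ n →
    (∀ x ∈ A, m ≤ x) → (∀ x ∈ B, m ≤ x) →
    (GLP ((worm A).imp (worm B)) ∧ GLP ((worm B).imp (worm A))) ∨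
    GLP ((worm A).imp (dia m (worm B))) ∨
    GLP ((worm B).imp (dia m (worm A))) := by
  intro n
  induction n with
  | zero =>
    intro A B m hn _ _
    have hA : A = [] := List.length_eq_zero_iff.1 (by omega)
    have hB : B = [] := List.length_eq_zero_iff.1 (by omega)
    subst hA; subst hB
    exact Or.inl ⟨gid _, gid _⟩
  | succ n ih =>
    intro A B m hn hlbA hlbB
    by_cases hAe : A = []
    · subst hAe
      by_cases hBe : B = []
      · subst hBe; exact Or.inl ⟨gid _, gid _⟩
      · obtain ⟨b, w, rfl⟩ := List.exists_cons_of_ne_nil hBe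
        exact Or.inr (Or.inr (gw_dia_top (hlbB b (by simp))))
    · by_cases hBe : B = []
      · subst hBe
        obtain ⟨a, w, rfl⟩ := List.exists_cons_of_ne_nil hAe
        exact Or.inr (Or.inl (gw_dia_top (hlbA a (by simp))))
      · -- both nonempty
        obtain ⟨μ, hμmem, hμlb⟩ := gexists_min (A ++ B) (by simp [hAe])
        have hmμ : m ≤ μ := by
          rcases List.mem_append.1 hμmem with h | h
          · exact hlbA μ h
          · exact hlbB μ h
        have hμA : ∀ x ∈ A, μ ≤ x := fun x hx => hμlb x (List.mem_append_left _ hx)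
        have hμB : ∀ x ∈ B, μ ≤ x := fun x hx => hμlb x (List.mem_append_right _ hx)
        obtain ⟨P, Abar, memP, memAbar, hPgt, hAbarlen, hPlen, hPstrict, dA1, dA2, dA3⟩ :=
          gdecomp μ A hAe hμA
        obtain ⟨Q, Bbar, memQ, memBbar, hQgt, hBbarlen, hQlen, hQstrict, dB1, dB2, dB3⟩ :=
          gdecomp μ B hBe hμB
        have wrapM : GLP ((worm A).imp (dia μ (worm B))) →
            (GLP ((worm A).imp (worm B)) ∧ GLP ((worm B).imp (worm A))) ∨
            GLP ((worm A).imp (dia m (worm B))) ∨ GLP ((worm B).imp (dia m (worm A))) :=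
          fun h => Or.inr (Or.inl (ghs h (gdia_le hmμ)))
        have wrapR : GLP ((worm B).imp (dia μ (worm A))) →
            (GLP ((worm A).imp (worm B)) ∧ GLP ((worm B).imp (worm A))) ∨
            GLP ((worm A).imp (dia m (worm B))) ∨ GLP ((worm B).imp (dia m (worm A))) :=
          fun h => Or.inr (Or.inr (ghs h (gdia_le hmμ)))
        have t1 := ih Abar B μ (by omega) (fun x hx => hμA x (memAbar x hx)) hμB
        have t2 := ih Bbar A μ (by omega) (fun x hx => hμB x (memBbar x hx)) hμA
        rcases t1 with h1 | h1 | h1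
        · exact wrapM (ghs dA2 (gdia_mono h1.1))
        · exact wrapM (ghs dA2 (ghs (gdia_mono h1) gdia_dia))
        · -- h1 : ⊢ B → ◇μ Abar
          rcases t2 with h2 | h2 | h2
          · exact wrapR (ghs dB2 (gdia_mono h2.1))
          · exact wrapR (ghs dB2 (ghs (gdia_mono h2) gdia_dia))
          · -- h2 : ⊢ A → ◇μ Bbar
            by_cases hPe : P = []
            · by_cases hQe : Q = []
              · subst hPe; subst hQe
                exact Or.inl ⟨ghs (gandi gto_top h2) dB3, ghs (gandi gto_top h1) dA3⟩
              · -- P = [], Q ≠ [] : output right (A ≺ B)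
                subst hPe
                obtain ⟨q, Q', rfl⟩ := List.exists_cons_of_ne_nil hQe
                have hq : μ < q := hQgt q (by simp)
                have s1 : GLP ((worm B).imp ((dia q Formula.top).and (dia μ (worm Abar)))) :=
                  gandi (ghs dB1 (gw_dia_top le_rfl)) h1
                have s2 : GLP ((worm B).imp
                    (dia q ((Formula.top).and (dia μ (worm Abar))))) := ghs s1 (gJ2 hq)
                have s3 : GLP ((worm B).imp (dia q (worm A))) := ghs s2 (gdia_mono dA3)
                exact wrapR (ghs s3 (gdia_le (le_of_lt hq)))
            · by_cases hQe : Q = []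
              · -- Q = [], P ≠ [] : output middle (B ≺ A)
                subst hQe
                obtain ⟨p, P', rfl⟩ := List.exists_cons_of_ne_nil hPe
                have hp : μ < p := hPgt p (by simp)
                have s1 : GLP ((worm A).imp ((dia p Formula.top).and (dia μ (worm Bbar)))) :=
                  gandi (ghs dA1 (gw_dia_top le_rfl)) h2
                have s2 : GLP ((worm A).imp
                    (dia p ((Formula.top).and (dia μ (worm Bbar))))) := ghs s1 (gJ2 hp)
                have s3 : GLP ((worm A).imp (dia p (worm B))) := ghs s2 (gdia_mono dB3)
                exact wrapM (ghs s3 (gdia_le (le_of_lt hp)))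
              · -- both heads nonempty
                obtain ⟨μ', hμ'mem, hμ'lb⟩ := gexists_min (P ++ Q) (by simp [hPe])
                have hμμ' : μ < μ' := by
                  rcases List.mem_append.1 hμ'mem with h | h
                  · exact hPgt μ' h
                  · exact hQgt μ' h
                have lbP : ∀ x ∈ P, μ' ≤ x := fun x hx => hμ'lb x (List.mem_append_left _ hx)
                have lbQ : ∀ x ∈ Q, μ' ≤ x := fun x hx => hμ'lb x (List.mem_append_right _ hx)
                have hlen : P.length + Q.length ≤ n := by
                  rcases List.mem_append.1 hμmem with h | h
                  · have := hPstrict h; omega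
                  · have := hQstrict h; omega
                have t3 := ih P Q μ' hlen lbP lbQ
                rcases t3 with h3 | h3 | h3
                · exact Or.inl ⟨ghs (gandi (ghs dA1 h3.1) h2) dB3,
                    ghs (gandi (ghs dB1 h3.2) h1) dA3⟩
                · -- h3 : ⊢ P → ◇μ' Q : middle output (B ≺ A)
                  have s1 : GLP ((worm A).imp ((dia μ' (worm Q)).and (dia μ (worm Bbar)))) :=
                    gandi (ghs dA1 h3) h2
                  have s2 := ghs s1 (gJ2 hμμ')
                  have s3 : GLP ((worm A).imp (dia μ' (worm B))) := ghs s2 (gdia_mono dB3)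
                  exact wrapM (ghs s3 (gdia_le (le_of_lt hμμ')))
                · -- h3 : ⊢ Q → ◇μ' P : right output (A ≺ B)
                  have s1 : GLP ((worm B).imp ((dia μ' (worm P)).and (dia μ (worm Abar)))) :=
                    gandi (ghs dB1 h3) h1
                  have s2 := ghs s1 (gJ2 hμμ')
                  have s3 : GLP ((worm B).imp (dia μ' (worm A))) := ghs s2 (gdia_mono dA3)
                  exact wrapR (ghs s3 (gdia_le (le_of_lt hμμ')))

end WormTri

section WormConj
variable {L : Type} [LinearOrder L]

private theorem gconj : ∀ (n : ℕ) (A B : List L), A.length + B.length ≤ n →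
    ∃ C : List L, (∀ x ∈ C, x ∈ A ∨ x ∈ B) ∧
      GLP (((worm A).and (worm B)).imp (worm C)) ∧
      GLP ((worm C).imp ((worm A).and (worm B))) := by
  intro n
  induction n with
  | zero =>
    intro A B hn
    have hA : A = [] := List.length_eq_zero_iff.1 (by omega)
    have hB : B = [] := List.length_eq_zero_iff.1 (by omega)
    subst hA; subst hB
    exact ⟨[], by simp, gand_l, gandi (gid _) (gid _)⟩
  | succ n ih =>
    intro A B hn
    by_cases hAe : A = []
    · subst hAe
      exact ⟨B, fun x hx => Or.inr hx, gand_r, gandi gto_top (gid _)⟩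
    · by_cases hBe : B = []
      · subst hBe
        exact ⟨A, fun x hx => Or.inl hx, gand_l, gandi (gid _) gto_top⟩
      · obtain ⟨μ, hμmem, hμlb⟩ := gexists_min (A ++ B) (by simp [hAe])
        have hμA : ∀ x ∈ A, μ ≤ x := fun x hx => hμlb x (List.mem_append_left _ hx)
        have hμB : ∀ x ∈ B, μ ≤ x := fun x hx => hμlb x (List.mem_append_right _ hx)
        obtain ⟨P, Abar, memP, memAbar, hPgt, hAbarlen, hPlen, hPstrict, dA1, dA2, dA3⟩ :=
          gdecomp μ A hAe hμA
        obtain ⟨Q, Bbar, memQ, memBbar, hQgt, hQbarlen, hQlen, hQstrict, dB1, dB2, dB3⟩ :=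
          gdecomp μ B hBe hμB
        -- combine the two ⟨μ⟩-tails into a single one
        have t := gtri (Abar.length + Bbar.length) Abar Bbar μ le_rfl
          (fun x hx => hμA x (memAbar x hx)) (fun x hx => hμB x (memBbar x hx))
        obtain ⟨D, memD, f1, f2⟩ : ∃ D : List L, (∀ x ∈ D, x ∈ Abar ∨ x ∈ Bbar) ∧
            GLP (((dia μ (worm Abar)).and (dia μ (worm Bbar))).imp (dia μ (worm D))) ∧
            GLP ((dia μ (worm D)).imp ((dia μ (worm Abar)).and (dia μ (worm Bbar)))) := by
          rcases t with h | h | h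
          · exact ⟨Abar, fun x hx => Or.inl hx, gand_l, gandi (gid _) (gdia_mono h.1)⟩
          · exact ⟨Abar, fun x hx => Or.inl hx, gand_l,
              gandi (gid _) (ghs (gdia_mono h) gdia_dia)⟩
          · exact ⟨Bbar, fun x hx => Or.inr hx, gand_r,
              gandi (ghs (gdia_mono h) gdia_dia) (gid _)⟩
        have hlen : P.length + Q.length ≤ n := by
          rcases List.mem_append.1 hμmem with h | h
          · have := hPstrict h; omega
          · have := hQstrict h; omega
        obtain ⟨R, memR, g1, g2⟩ := ih P Q hlen
        have hRgt : ∀ x ∈ R, μ < x := by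
          intro x hx
          rcases memR x hx with h | h
          · exact hPgt x h
          · exact hQgt x h
        refine ⟨R ++ μ :: D, ?_, ?_, ?_⟩
        · intro x hx
          rcases List.mem_append.1 hx with h | h
          · rcases memR x h with h' | h'
            · exact Or.inl (memP x h')
            · exact Or.inr (memQ x h')
          · rcases List.mem_cons.1 h with rfl | h'
            · exact List.mem_append.1 hμmem
            · rcases memD x h' with h'' | h''
              · exact Or.inl (memAbar x h'')
              · exact Or.inr (memBbar x h'')
        · -- forward : A ∧ B → worm C
          have u1 : GLP (((worm A).and (worm B)).imp ((worm P).and (worm Q))) :=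
            gandi (ghs gand_l dA1) (ghs gand_r dB1)
          have u2 : GLP (((worm A).and (worm B)).imp (worm R)) := ghs u1 g1
          have u3 : GLP (((worm A).and (worm B)).imp
              ((dia μ (worm Abar)).and (dia μ (worm Bbar)))) :=
            gandi (ghs gand_l dA2) (ghs gand_r dB2)
          have u4 : GLP (((worm A).and (worm B)).imp (dia μ (worm D))) := ghs u3 f1
          exact ghs (gandi u2 u4) (gsplit_bwd R D hRgt)
        · -- backward : worm C → A ∧ B
          have v0 : GLP ((worm (R ++ μ :: D)).imp ((worm R).and (dia μ (worm D)))) :=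
            gsplit_fwd R D hRgt
          have v1 : GLP ((worm (R ++ μ :: D)).imp ((worm P).and (worm Q))) :=
            ghs (ghs v0 gand_l) g2
          have v2 : GLP ((worm (R ++ μ :: D)).imp
              ((dia μ (worm Abar)).and (dia μ (worm Bbar)))) := ghs (ghs v0 gand_r) f2
          have vA : GLP ((worm (R ++ μ :: D)).imp (worm A)) :=
            ghs (gandi (ghs v1 gand_l) (ghs v2 gand_l)) dA3
          have vB : GLP ((worm (R ++ μ :: D)).imp (worm B)) :=
            ghs (gandi (ghs v1 gand_r) (ghs v2 gand_r)) dB3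
          exact gandi vA vB

end WormConj

section WormMain
variable {L : Type} [LinearOrder L] [OrderBot L]

private lemma gmain (irr : ∀ D : List L, ¬ GLP ((worm D).imp (dia (⊥ : L) (worm D))))
    (A B : List L) :
    GLP ((worm A).imp (worm B)) ∨
    GLP (((worm A).and (worm B)).imp (dia (⊥ : L) (worm A))) := by
  obtain ⟨C, _, f1, f2⟩ := gconj (A.length + B.length) A B le_rfl
  have t := gtri (A.length + C.length) A C (⊥ : L) le_rfl (fun _ _ => bot_le) (fun _ _ => bot_le)
  rcases t with h | h | h
  · exact Or.inl (ghs h.1 (ghs f2 gand_r))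
  · exact absurd (ghs h (gdia_mono (ghs f2 gand_l))) (irr A)
  · exact Or.inr (ghs f1 h)

end WormMain

/-- Assuming irreflexivity of `<_0` (with `0 = ⊥` the least element of the
order), worms satisfy the disjunction property:
`GLP ⊢ A → ⋁ᵢ A_i` iff `GLP ⊢ A → A_i` for some `i`. -/
theorem worm_disjunction_property {L : Type} [LinearOrder L] [OrderBot L]
    (irrefl : ∀ D : List L, ¬ GLP ((worm D).imp (Formula.dia (⊥ : L) (worm D))))
    (A : List L) (As : List (List L)) :
    GLP ((worm A).imp (disjWorms As)) ↔
      ∃ Ai ∈ As, GLP ((worm A).imp (worm Ai)) := by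
  constructor
  · intro h
    by_contra hno
    push_neg at hno
    have key : ∀ Ai ∈ As, GLP (((worm A).and (worm Ai)).imp (dia (⊥ : L) (worm A))) :=
      fun Ai hAi => (gmain irrefl A Ai).resolve_left (hno Ai hAi)
    have dd : ∀ l : List (List L),
        (∀ Ai ∈ l, GLP (((worm A).and (worm Ai)).imp (dia (⊥ : L) (worm A)))) →
        GLP (((worm A).and (disjWorms l)).imp (dia (⊥ : L) (worm A))) := by
      intro l
      induction l with
      | nil => intro _; exact ghs gand_r (gefq _)
      | cons Bh tl ihl =>
        intro hl
        have e : disjWorms (Bh :: tl) = (worm Bh).or (disjWorms tl) := rfl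
        rw [e]
        exact gand_or (hl Bh (by simp)) (ihl (fun Ai hAi => hl Ai (by simp [hAi])))
    exact irrefl A (ghs (gandi (gid _) h) (dd As key))
  · rintro ⟨Ai, hmem, hAi⟩
    have inj : ∀ l : List (List L), Ai ∈ l → GLP ((worm Ai).imp (disjWorms l)) := by
      intro l
      induction l with
      | nil => intro h; cases h
      | cons Bh tl ihl =>
        intro h
        have e : disjWorms (Bh :: tl) = (worm Bh).or (disjWorms tl) := rfl
        rw [e]
        rcases List.mem_cons.1 h with rfl | h'
        · exact gor_inl
        · exact ghs (ihl h') gor_inr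
    exact ghs hAi (inj As hmem)
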